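/- In the Gram–Schmidt orthogonalization of the columns of the equivalent channel matrix of the 3D MIMO code, the residual vectors satisfy r_2 = h_2, r_3 = h_3 − ⟨q_1,h_3⟩q_1, and r_4 = h_4 − ⟨q_2,h_4⟩q_2. -/

import Mathlib

noncomputable section

open scoped InnerProductSpace

namespace MIMO3D

/-- The Golden-code parameter θ = (1+√5)/2. -/
def goldenTheta : ℝ := (1 + Real.sqrt 5) / 2

/-- θ̄ = 1 − θ. -/
def goldenThetaBar : ℝ := 1 - goldenTheta

/-- α = 1 + i(1−θ). -/
def alpha : ℂ := 1 + Complex.I * (1 - (goldenTheta : ℂ))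

/-- ᾱ = 1 + i(1−θ̄). -/
def alphaBar : ℂ := 1 + Complex.I * (1 - (goldenThetaBar : ℂ))

/-- The 3D MIMO codeword matrix X(s), a 4×4 complex matrix built from the
eight information symbols s₁,…,s₈ (here 0-indexed as `s 0`,…,`s 7`). -/
def codeword (s : Fin 8 → ℂ) : Matrix (Fin 4) (Fin 4) ℂ :=
  ((Real.sqrt 5 : ℂ))⁻¹ •
  !![alpha * (s 0 + (goldenTheta : ℂ) * s 1),
     alpha * (s 2 + (goldenTheta : ℂ) * s 3),
     -(starRingEnd ℂ alpha) * (starRingEnd ℂ (s 4) + (goldenTheta : ℂ) * starRingEnd ℂ (s 5)),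
     -(starRingEnd ℂ alpha) * (starRingEnd ℂ (s 6) + (goldenTheta : ℂ) * starRingEnd ℂ (s 7));
     Complex.I * alphaBar * (s 2 + (goldenThetaBar : ℂ) * s 3),
     alphaBar * (s 0 + (goldenThetaBar : ℂ) * s 1),
     Complex.I * (starRingEnd ℂ alphaBar) * (starRingEnd ℂ (s 6) + (goldenThetaBar : ℂ) * starRingEnd ℂ (s 7)),
     -(starRingEnd ℂ alphaBar) * (starRingEnd ℂ (s 4) + (goldenThetaBar : ℂ) * starRingEnd ℂ (s 5));
     alpha * (s 4 + (goldenTheta : ℂ) * s 5),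
     alpha * (s 6 + (goldenTheta : ℂ) * s 7),
     (starRingEnd ℂ alpha) * (starRingEnd ℂ (s 0) + (goldenTheta : ℂ) * starRingEnd ℂ (s 1)),
     (starRingEnd ℂ alpha) * (starRingEnd ℂ (s 2) + (goldenTheta : ℂ) * starRingEnd ℂ (s 3));
     Complex.I * alphaBar * (s 6 + (goldenThetaBar : ℂ) * s 7),
     alphaBar * (s 4 + (goldenThetaBar : ℂ) * s 5),
     -(Complex.I * (starRingEnd ℂ alphaBar) * (starRingEnd ℂ (s 2) + (goldenThetaBar : ℂ) * starRingEnd ℂ (s 3))),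
     (starRingEnd ℂ alphaBar) * (starRingEnd ℂ (s 0) + (goldenThetaBar : ℂ) * starRingEnd ℂ (s 1))]

/-- ṽ(Y): stack the columns of the 2×4 complex matrix Y into ℂ^8
(giving (Y₁₁,Y₂₁,Y₁₂,Y₂₂,Y₁₃,Y₂₃,Y₁₄,Y₂₄)) and replace each complex entry z
by the pair (Re z, Im z), producing a vector of ℝ^16 (Euclidean space). -/
def tildeVec (Y : Matrix (Fin 2) (Fin 4) ℂ) : EuclideanSpace ℝ (Fin 16) :=
  WithLp.toLp 2 fun (m : Fin 16) =>
    if m.val % 2 = 0 then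
      (Y ⟨m.val % 4 / 2, by omega⟩ ⟨m.val / 4, by have := m.isLt; omega⟩).re
    else
      (Y ⟨m.val % 4 / 2, by omega⟩ ⟨m.val / 4, by have := m.isLt; omega⟩).im

/-- Recover the complex symbol vector s ∈ ℂ^8 from its real coordinate vector
s̃ = (Re s₁, Im s₁, …, Re s₈, Im s₈) ∈ ℝ^16. -/
def sOfReal (v : Fin 16 → ℝ) : Fin 8 → ℂ :=
  fun k => (v ⟨2 * k.val, by have := k.isLt; omega⟩ : ℂ)
    + (v ⟨2 * k.val + 1, by have := k.isLt; omega⟩ : ℂ) * Complex.I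

/-- The j-th column h_j (0-indexed: `hcol H j` is h_{j+1} of the paper) of the
equivalent channel matrix H_eq: the image of the j-th standard basis vector of
ℝ^16 under the ℝ-linear map s̃ ↦ ṽ(H · X(s)). -/
def hcol (H : Matrix (Fin 2) (Fin 4) ℂ) (j : Fin 16) : EuclideanSpace ℝ (Fin 16) :=
  tildeVec (H * codeword (sOfReal (Pi.single j 1)))

/-- The Gram–Schmidt residual r_j (0-indexed) of the columns of H_eq:
r_j = h_j − Σ_{k<j} ⟨q_k, h_j⟩ q_k. -/
def rvec (H : Matrix (Fin 2) (Fin 4) ℂ) (j : Fin 16) : EuclideanSpace ℝ (Fin 16) :=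
  have : WellFoundedLT (Fin 16) := inferInstance
  InnerProductSpace.gramSchmidt ℝ (hcol H) j

/-- The Gram–Schmidt orthonormalization q_j = r_j / ‖r_j‖ (0-indexed). -/
def qvec (H : Matrix (Fin 2) (Fin 4) ℂ) (j : Fin 16) : EuclideanSpace ℝ (Fin 16) :=
  have : WellFoundedLT (Fin 16) := inferInstance
  InnerProductSpace.gramSchmidtNormed ℝ (hcol H) j

end MIMO3D

namespace MIMO3D

open InnerProductSpace

instance : WellFoundedLT (Fin 16) := inferInstance

lemma s0 : sOfReal (Pi.single 0 1) = fun k => if k = 0 then 1 else 0 := by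
  funext k; fin_cases k <;> norm_num [sOfReal, Pi.single_apply, Fin.ext_iff, show ((2:Fin 16)).val = 2 from rfl, show ((3:Fin 16)).val = 3 from rfl]
lemma s1 : sOfReal (Pi.single 1 1) = fun k => if k = 0 then Complex.I else 0 := by
  funext k; fin_cases k <;> norm_num [sOfReal, Pi.single_apply, Fin.ext_iff, show ((2:Fin 16)).val = 2 from rfl, show ((3:Fin 16)).val = 3 from rfl]
lemma s2 : sOfReal (Pi.single 2 1) = fun k => if k = 1 then 1 else 0 := by
  funext k; fin_cases k <;> norm_num [sOfReal, Pi.single_apply, Fin.ext_iff, show ((2:Fin 16)).val = 2 from rfl, show ((3:Fin 16)).val = 3 from rfl]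
lemma s3 : sOfReal (Pi.single 3 1) = fun k => if k = 1 then Complex.I else 0 := by
  funext k; fin_cases k <;> norm_num [sOfReal, Pi.single_apply, Fin.ext_iff, show ((2:Fin 16)).val = 2 from rfl, show ((3:Fin 16)).val = 3 from rfl]

lemma inner_tildeVec (Y Z : Matrix (Fin 2) (Fin 4) ℂ) :
    ⟪tildeVec Y, tildeVec Z⟫_ℝ =
      ∑ b : Fin 4, ∑ a : Fin 2, ((Y a b).re * (Z a b).re + (Y a b).im * (Z a b).im) := by
  simp [PiLp.inner_apply, RCLike.inner_apply, tildeVec, Fin.sum_univ_succ]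
  norm_num [show (Fin.succ 2 : Fin 4) = 3 from rfl]
  ring

/-- The diagonal multipliers for the first four columns of H_eq. -/
def dvec : Fin 4 → Fin 4 → ℂ
  | 0 => ![alpha, alphaBar, starRingEnd ℂ alpha, starRingEnd ℂ alphaBar]
  | 1 => ![Complex.I * alpha, Complex.I * alphaBar,
           -(Complex.I * starRingEnd ℂ alpha), -(Complex.I * starRingEnd ℂ alphaBar)]
  | 2 => ![(goldenTheta:ℂ) * alpha, (goldenThetaBar:ℂ) * alphaBar,
           (goldenTheta:ℂ) * starRingEnd ℂ alpha, (goldenThetaBar:ℂ) * starRingEnd ℂ alphaBar]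
  | 3 => ![Complex.I * (goldenTheta:ℂ) * alpha, Complex.I * (goldenThetaBar:ℂ) * alphaBar,
           -(Complex.I * (goldenTheta:ℂ) * starRingEnd ℂ alpha),
           -(Complex.I * (goldenThetaBar:ℂ) * starRingEnd ℂ alphaBar)]

lemma mulcode0 (H : Matrix (Fin 2) (Fin 4) ℂ) :
    H * codeword (sOfReal (Pi.single 0 1)) =
    Matrix.of fun a b => ((Real.sqrt 5 : ℂ))⁻¹ * (H a b * dvec 0 b) := by
  rw [s0]; ext a b
  fin_cases a <;> fin_cases b <;>
    simp [codeword, dvec, Matrix.mul_apply, Fin.sum_univ_four, Matrix.vecHead,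
      Matrix.vecTail] <;> ring

lemma mulcode1 (H : Matrix (Fin 2) (Fin 4) ℂ) :
    H * codeword (sOfReal (Pi.single 1 1)) =
    Matrix.of fun a b => ((Real.sqrt 5 : ℂ))⁻¹ * (H a b * dvec 1 b) := by
  rw [s1]; ext a b
  fin_cases a <;> fin_cases b <;>
    simp [codeword, dvec, Matrix.mul_apply, Fin.sum_univ_four, Matrix.vecHead,
      Matrix.vecTail] <;> ring

lemma mulcode2 (H : Matrix (Fin 2) (Fin 4) ℂ) :
    H * codeword (sOfReal (Pi.single 2 1)) =
    Matrix.of fun a b => ((Real.sqrt 5 : ℂ))⁻¹ * (H a b * dvec 2 b) := by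
  rw [s2]; ext a b
  fin_cases a <;> fin_cases b <;>
    simp [codeword, dvec, Matrix.mul_apply, Fin.sum_univ_four, Matrix.vecHead,
      Matrix.vecTail] <;> ring

lemma mulcode3 (H : Matrix (Fin 2) (Fin 4) ℂ) :
    H * codeword (sOfReal (Pi.single 3 1)) =
    Matrix.of fun a b => ((Real.sqrt 5 : ℂ))⁻¹ * (H a b * dvec 3 b) := by
  rw [s3]; ext a b
  fin_cases a <;> fin_cases b <;>
    simp [codeword, dvec, Matrix.mul_apply, Fin.sum_univ_four, Matrix.vecHead,
      Matrix.vecTail] <;> ring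

lemma orth01 (H : Matrix (Fin 2) (Fin 4) ℂ) : ⟪hcol H 0, hcol H 1⟫_ℝ = 0 := by
  simp only [hcol, mulcode0 H, mulcode1 H, inner_tildeVec]
  simp only [Matrix.of_apply, Fin.sum_univ_four, Fin.sum_univ_two]
  simp [dvec, alpha, alphaBar, goldenThetaBar, Matrix.vecHead, Matrix.vecTail,
    ← Complex.ofReal_inv, Complex.mul_re, Complex.mul_im]
  ring

lemma orth12 (H : Matrix (Fin 2) (Fin 4) ℂ) : ⟪hcol H 1, hcol H 2⟫_ℝ = 0 := by
  simp only [hcol, mulcode1 H, mulcode2 H, inner_tildeVec]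
  simp only [Matrix.of_apply, Fin.sum_univ_four, Fin.sum_univ_two]
  simp [dvec, alpha, alphaBar, goldenThetaBar, Matrix.vecHead, Matrix.vecTail,
    ← Complex.ofReal_inv, Complex.mul_re, Complex.mul_im]
  ring

lemma orth03 (H : Matrix (Fin 2) (Fin 4) ℂ) : ⟪hcol H 0, hcol H 3⟫_ℝ = 0 := by
  simp only [hcol, mulcode0 H, mulcode3 H, inner_tildeVec]
  simp only [Matrix.of_apply, Fin.sum_univ_four, Fin.sum_univ_two]
  simp [dvec, alpha, alphaBar, goldenThetaBar, Matrix.vecHead, Matrix.vecTail,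
    ← Complex.ofReal_inv, Complex.mul_re, Complex.mul_im]
  ring

lemma orth23 (H : Matrix (Fin 2) (Fin 4) ℂ) : ⟪hcol H 2, hcol H 3⟫_ℝ = 0 := by
  simp only [hcol, mulcode2 H, mulcode3 H, inner_tildeVec]
  simp only [Matrix.of_apply, Fin.sum_univ_four, Fin.sum_univ_two]
  simp [dvec, alpha, alphaBar, goldenThetaBar, Matrix.vecHead, Matrix.vecTail,
    ← Complex.ofReal_inv, Complex.mul_re, Complex.mul_im]
  ring

lemma proj_smul_eq (v w : EuclideanSpace ℝ (Fin 16)) :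
    (⟪v, w⟫_ℝ / ((‖v‖:ℝ) ^ 2)) • v = ⟪‖v‖⁻¹ • v, w⟫_ℝ • (‖v‖⁻¹ • v) := by
  rw [real_inner_smul_left, smul_smul]
  congr 1
  rw [div_eq_mul_inv, sq, mul_inv]
  ring

lemma rvec_eq (H : Matrix (Fin 2) (Fin 4) ℂ) (j : Fin 16) :
    rvec H j = gramSchmidt ℝ (hcol H) j := rfl

lemma qvec_eq (H : Matrix (Fin 2) (Fin 4) ℂ) (j : Fin 16) :
    qvec H j = ‖gramSchmidt ℝ (hcol H) j‖⁻¹ • gramSchmidt ℝ (hcol H) j := by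
  rw [show qvec H j = gramSchmidtNormed ℝ (hcol H) j from rfl, gramSchmidtNormed]
  norm_num

lemma gs_zero (H : Matrix (Fin 2) (Fin 4) ℂ) : gramSchmidt ℝ (hcol H) 0 = hcol H 0 := by
  rw [gramSchmidt_def, show Finset.Iio (0 : Fin 16) = ∅ by decide]
  simp

lemma gs_one (H : Matrix (Fin 2) (Fin 4) ℂ) : gramSchmidt ℝ (hcol H) 1 = hcol H 1 := by
  rw [gramSchmidt_def, show Finset.Iio (1 : Fin 16) = {0} by decide,
    Finset.sum_singleton, gs_zero H, Submodule.starProjection_singleton, orth01]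
  simp

lemma gs_two (H : Matrix (Fin 2) (Fin 4) ℂ) :
    gramSchmidt ℝ (hcol H) 2
      = hcol H 2 - (⟪hcol H 0, hcol H 2⟫_ℝ / ((‖hcol H 0‖:ℝ) ^ 2)) • hcol H 0 := by
  rw [gramSchmidt_def, show Finset.Iio (2 : Fin 16) = {0, 1} by decide,
    Finset.sum_insert (by decide), Finset.sum_singleton, gs_zero H, gs_one H,
    Submodule.starProjection_singleton, Submodule.starProjection_singleton, orth12]
  simp

lemma rvec_one (H : Matrix (Fin 2) (Fin 4) ℂ) : rvec H 1 = hcol H 1 := by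
  rw [rvec_eq, gs_one]

lemma rvec_two (H : Matrix (Fin 2) (Fin 4) ℂ) :
    rvec H 2 = hcol H 2 - ⟪qvec H 0, hcol H 2⟫_ℝ • qvec H 0 := by
  rw [rvec_eq, gs_two, qvec_eq, gs_zero, ← proj_smul_eq]

lemma rvec_three (H : Matrix (Fin 2) (Fin 4) ℂ) :
    rvec H 3 = hcol H 3 - ⟪qvec H 1, hcol H 3⟫_ℝ • qvec H 1 := by
  have o23' : ⟪gramSchmidt ℝ (hcol H) 2, hcol H 3⟫_ℝ = 0 := by
    rw [gs_two, inner_sub_left, real_inner_smul_left, orth23, orth03]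
    ring
  rw [rvec_eq, gramSchmidt_def, show Finset.Iio (3 : Fin 16) = {0, 1, 2} by decide,
    Finset.sum_insert (by decide), Finset.sum_insert (by decide), Finset.sum_singleton,
    gs_zero H, gs_one H, Submodule.starProjection_singleton, Submodule.starProjection_singleton,
    Submodule.starProjection_singleton, orth03, o23', qvec_eq, gs_one, ← proj_smul_eq]
  simp

end MIMO3D

open MIMO3D

/-- The Gram–Schmidt residuals satisfy r₂ = h₂,
r₃ = h₃ − ⟨q₁,h₃⟩q₁ and r₄ = h₄ − ⟨q₂,h₄⟩q₂ (paper's 1-based indices;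
0-indexed here: r₁ = `rvec H 1`, etc.). -/
theorem stmt8 (H : Matrix (Fin 2) (Fin 4) ℂ) (hLI : LinearIndependent ℝ (hcol H)) :
    rvec H 1 = hcol H 1 ∧
    rvec H 2 = hcol H 2 - ⟪qvec H 0, hcol H 2⟫_ℝ • qvec H 0 ∧
    rvec H 3 = hcol H 3 - ⟪qvec H 1, hcol H 3⟫_ℝ • qvec H 1 := by
  exact ⟨rvec_one H, rvec_two H, rvec_three H⟩
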